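/- Fix φ > 0 and a > 0, b > 0. Let N_A : ℝ → ℝ and N_B : ℝ → ℝ be nonnegative functions with N_A(t)/t → a and N_B(t)/t → b as t → ∞. Define, for t > 0, log E(t) = 2φ log φ − 2 log Γ(φ) + log Γ(φ + N_A(t)) + log Γ(φ + N_B(t)) − (2φ + N_A(t) + N_B(t)) · log(φ + (N_A(t) + N_B(t))/2) + N_A(t) + N_B(t). Then (log E(t))/t → a·log(2a/(a+b)) + b·log(2b/(a+b)) as t → ∞. -/

import Mathlib

open Filter Real


lemma r_eq (n : ℕ) (hn : 1 ≤ n) :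
    Real.log (Nat.factorial n) - ((n : ℝ) * Real.log n - n)
      = Real.log (Stirling.stirlingSeq n) + 1 / 2 * Real.log (2 * n) := by
  have h := Stirling.log_stirlingSeq_formula n
  have hn' : (0 : ℝ) < n := by exact_mod_cast hn
  rw [Real.log_div (ne_of_gt hn') (Real.exp_ne_zero 1), Real.log_exp] at h
  linarith [h]

lemma tendsto_log_div_atTop' : Tendsto (fun y : ℝ => Real.log y / y) atTop (nhds 0) := by
  simpa using Real.isLittleO_log_id_atTop.tendsto_div_nhds_zero

lemma tendsto_log_mul_div (c : ℝ) (hc : 0 < c) :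
    Tendsto (fun y : ℝ => Real.log (c * y) / y) atTop (nhds 0) := by
  have h2 := (tendsto_const_nhds.div_atTop tendsto_id :
      Tendsto (fun y : ℝ => Real.log c / y) atTop (nhds 0)).add tendsto_log_div_atTop'
  rw [add_zero] at h2
  apply Tendsto.congr' _ h2
  filter_upwards [eventually_gt_atTop 0] with y hy
  rw [Real.log_mul (ne_of_gt hc) (ne_of_gt hy)]
  ring

lemma tendsto_r :
    Tendsto (fun n : ℕ => (Real.log (Nat.factorial n) - ((n : ℝ) * Real.log n - n)) / n)
      atTop (nhds 0) := by
  have h1 : Tendsto (fun n : ℕ => Real.log (Stirling.stirlingSeq n) / n) atTop (nhds 0) := by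
    have hl : Tendsto (fun n : ℕ => Real.log (Stirling.stirlingSeq n)) atTop
        (nhds (Real.log (√π))) :=
      ((Real.continuousAt_log (by positivity)).tendsto.comp Stirling.tendsto_stirlingSeq_sqrt_pi)
    exact hl.div_atTop tendsto_natCast_atTop_atTop
  have h2 : Tendsto (fun n : ℕ => 1 / 2 * (Real.log (2 * n) / n)) atTop (nhds 0) := by
    have := ((tendsto_log_mul_div 2 two_pos).comp tendsto_natCast_atTop_atTop).const_mul (1/2 : ℝ)
    simpa using this
  have hsum := h1.add h2
  rw [add_zero] at hsum
  apply Tendsto.congr' _ hsum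
  filter_upwards [eventually_ge_atTop 1] with n hn
  rw [r_eq n hn]
  ring
lemma hfloor :
    Tendsto (fun y : ℝ =>
      (Real.log (Nat.factorial ⌊y⌋₊) - ((⌊y⌋₊ : ℝ) * Real.log ⌊y⌋₊ - ⌊y⌋₊)) / y) atTop (nhds 0) := by
  have hA := tendsto_r.comp (tendsto_nat_floor_atTop (α := ℝ))
  have hB : Tendsto (fun y : ℝ => (⌊y⌋₊ : ℝ) / y) atTop (nhds 1) := tendsto_nat_floor_div_atTop
  have h := hA.mul hB
  rw [zero_mul] at h
  apply Tendsto.congr' _ h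
  filter_upwards [eventually_ge_atTop (1 : ℝ)] with y hy
  have h1 : (1 : ℕ) ≤ ⌊y⌋₊ := Nat.le_floor (by exact_mod_cast hy)
  have h2 : ((⌊y⌋₊ : ℝ)) ≠ 0 := by
    have : (0:ℝ) < ⌊y⌋₊ := by exact_mod_cast h1
    exact ne_of_gt this
  simp only [Function.comp_apply]
  field_simp
lemma tendsto_log_Gamma_sub :
    Tendsto (fun y : ℝ => (Real.log (Real.Gamma y) - (y * Real.log y - y)) / y)
      atTop (nhds 0) := by
  set r : ℝ → ℝ := fun y => Real.log (Nat.factorial ⌊y⌋₊) - ((⌊y⌋₊ : ℝ) * Real.log ⌊y⌋₊ - ⌊y⌋₊) with hr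
  have hu : Tendsto (fun y : ℝ => (r y + 1) / y) atTop (nhds 0) := by
    have := hfloor.add (tendsto_const_nhds.div_atTop (tendsto_id) :
      Tendsto (fun y : ℝ => (1:ℝ) / y) atTop (nhds 0))
    rw [add_zero] at this
    apply Tendsto.congr' _ this
    filter_upwards [eventually_gt_atTop (0:ℝ)] with y hy
    rw [← add_div]
  have hl : Tendsto (fun y : ℝ => (r y - 2 * Real.log y - 1) / y) atTop (nhds 0) := by
    have h2 := (tendsto_log_div_atTop'.const_mul (2:ℝ))
    rw [mul_zero] at h2
    have h3 := (hfloor.sub h2).sub (tendsto_const_nhds.div_atTop (tendsto_id) :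
      Tendsto (fun y : ℝ => (1:ℝ) / y) atTop (nhds 0))
    rw [sub_zero, sub_zero] at h3
    apply Tendsto.congr' _ h3
    filter_upwards [eventually_gt_atTop (0:ℝ)] with y hy
    field_simp
    simp only [hr]
    ring
  apply tendsto_of_tendsto_of_tendsto_of_le_of_le' hl hu
  · -- lower bound eventually
    filter_upwards [eventually_ge_atTop (3:ℝ)] with y hy
    have hy0 : (0:ℝ) < y := by linarith
    obtain ⟨k, hk⟩ : ∃ k, ⌊y⌋₊ = k + 1 := ⟨⌊y⌋₊ - 1, by
      have : 3 ≤ ⌊y⌋₊ := Nat.le_floor (by exact_mod_cast hy); omega⟩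
    have hk2 : 2 ≤ k := by
      have : 3 ≤ ⌊y⌋₊ := Nat.le_floor (by exact_mod_cast hy); omega
    have hfl : ((⌊y⌋₊ : ℝ)) ≤ y := Nat.floor_le hy0.le
    have hfu : y < (⌊y⌋₊ : ℝ) + 1 := Nat.lt_floor_add_one y
    have hnR : ((k:ℝ) + 1) ≤ y := by rw [hk] at hfl; push_cast at hfl; linarith
    have hyu : y < (k:ℝ) + 2 := by rw [hk] at hfu; push_cast at hfu; linarith
    have hkR : (2:ℝ) ≤ (k:ℝ) := by exact_mod_cast hk2
    have hmono : Real.Gamma ((k:ℝ) + 1) ≤ Real.Gamma y :=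
      Real.Gamma_strictMonoOn_Ici.monotoneOn (by simp only [Set.mem_Ici]; linarith)
        (by simp only [Set.mem_Ici]; linarith) hnR
    have hgam : Real.Gamma ((k:ℝ) + 1) = (Nat.factorial k : ℝ) := Real.Gamma_nat_eq_factorial k
    have hΓpos : 0 < Real.Gamma ((k:ℝ)+1) := by rw [hgam]; positivity
    have hlog : Real.log ((Nat.factorial k : ℕ) : ℝ) ≤ Real.log (Real.Gamma y) := by
      rw [← hgam]; exact Real.log_le_log hΓpos hmono
    have hlogy : (0:ℝ) ≤ Real.log y := Real.log_nonneg (by linarith)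
    have hlogkn : Real.log ((k:ℝ)+1) ≤ Real.log y :=
      Real.log_le_log (by positivity) hnR
    have hle1 : Real.log y - Real.log ((k:ℝ)+1) ≤ (y - ((k:ℝ)+1)) / ((k:ℝ)+1) := by
      have h0 : (0:ℝ) < y / ((k:ℝ)+1) := by positivity
      have h1 := Real.log_le_sub_one_of_pos h0
      rw [Real.log_div (ne_of_gt hy0) (by positivity)] at h1
      rw [sub_div, div_self (by positivity : ((k:ℝ)+1) ≠ 0)]
      linarith
    have hprod : ((k:ℝ)+1) * (Real.log y - Real.log ((k:ℝ)+1)) ≤ y - ((k:ℝ)+1) := by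
      have := mul_le_mul_of_nonneg_left hle1 (by positivity : (0:ℝ) ≤ (k:ℝ)+1)
      rwa [mul_div_cancel₀ _ (by positivity : ((k:ℝ)+1) ≠ 0)] at this
    have hmul2 : (y - ((k:ℝ)+1)) * Real.log y ≤ Real.log y := by nlinarith
    have hkey : y * Real.log y - ((k:ℝ)+1) * Real.log ((k:ℝ)+1)
        ≤ Real.log y + (y - ((k:ℝ)+1)) := by nlinarith [hprod, hmul2]
    have hnum : r y - 2 * Real.log y - 1
        ≤ Real.log (Real.Gamma y) - (y * Real.log y - y) := by
      rw [hr]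
      simp only [hk]
      rw [Nat.factorial_succ]
      push_cast
      rw [Real.log_mul (by positivity) (by positivity)]
      linarith [hlog, hkey, hlogkn]
    exact div_le_div_of_nonneg_right hnum hy0.le
  · -- upper bound eventually
    filter_upwards [eventually_ge_atTop (3:ℝ)] with y hy
    have hy0 : (0:ℝ) < y := by linarith
    obtain ⟨k, hk⟩ : ∃ k, ⌊y⌋₊ = k + 1 := ⟨⌊y⌋₊ - 1, by
      have : 3 ≤ ⌊y⌋₊ := Nat.le_floor (by exact_mod_cast hy); omega⟩
    have hk2 : 2 ≤ k := by
      have : 3 ≤ ⌊y⌋₊ := Nat.le_floor (by exact_mod_cast hy); omega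
    have hfl : ((⌊y⌋₊ : ℝ)) ≤ y := Nat.floor_le hy0.le
    have hfu : y < (⌊y⌋₊ : ℝ) + 1 := Nat.lt_floor_add_one y
    have hnR : ((k:ℝ) + 1) ≤ y := by rw [hk] at hfl; push_cast at hfl; linarith
    have hyu : y < (k:ℝ) + 2 := by rw [hk] at hfu; push_cast at hfu; linarith
    have hmono : Real.Gamma y ≤ Real.Gamma ((k:ℝ) + 2) :=
      Real.Gamma_strictMonoOn_Ici.monotoneOn (by simp only [Set.mem_Ici]; linarith)
        (by simp only [Set.mem_Ici]; linarith) hyu.le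
    have hgam : Real.Gamma ((k:ℝ) + 2) = (Nat.factorial (k+1) : ℝ) := by
      have h := Real.Gamma_nat_eq_factorial (k+1)
      push_cast at h
      rw [show ((k:ℝ)+2) = ((k:ℝ)+1)+1 by ring]
      exact_mod_cast h
    have hΓpos : 0 < Real.Gamma y := Real.Gamma_pos_of_pos hy0
    have hlog : Real.log (Real.Gamma y) ≤ Real.log ((Nat.factorial (k+1) : ℕ) : ℝ) := by
      rw [← hgam]; exact Real.log_le_log hΓpos hmono
    have hlogy : (0:ℝ) ≤ Real.log y := Real.log_nonneg (by linarith)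
    have hlogkn : Real.log ((k:ℝ)+1) ≤ Real.log y :=
      Real.log_le_log (by positivity) hnR
    have hlogk0 : (0:ℝ) ≤ Real.log ((k:ℝ)+1) := Real.log_nonneg (by norm_num)
    have h1 : ((k:ℝ)+1) * Real.log ((k:ℝ)+1) ≤ ((k:ℝ)+1) * Real.log y :=
      mul_le_mul_of_nonneg_left hlogkn (by positivity)
    have h2 : ((k:ℝ)+1) * Real.log y ≤ y * Real.log y :=
      mul_le_mul_of_nonneg_right hnR hlogy
    have hnum : Real.log (Real.Gamma y) - (y * Real.log y - y) ≤ r y + 1 := by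
      rw [hr]
      simp only [hk]
      push_cast
      linarith [hlog, h1, h2]
    exact div_le_div_of_nonneg_right hnum hy0.le
lemma tendsto_gamma_comp {f : ℝ → ℝ} {c : ℝ} (hc : 0 < c)
    (hf : Tendsto (fun t => f t / t) atTop (nhds c)) :
    Tendsto (fun t => (Real.log (Real.Gamma (f t)) - (f t * Real.log (f t) - f t)) / t)
      atTop (nhds 0) := by
  have hftop : Tendsto f atTop atTop := by
    have h := hf.pos_mul_atTop hc (tendsto_id : Tendsto (fun t : ℝ => t) atTop atTop)
    apply h.congr'
    filter_upwards [eventually_ne_atTop (0:ℝ)] with t ht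
    field_simp
    rfl
  have hG := tendsto_log_Gamma_sub.comp hftop
  have h2 := hG.mul hf
  rw [zero_mul] at h2
  apply Tendsto.congr' _ h2
  have hfpos : ∀ᶠ t in atTop, 0 < f t := hftop.eventually (eventually_gt_atTop 0)
  filter_upwards [hfpos, eventually_gt_atTop (0:ℝ)] with t h1 ht
  simp only [Function.comp]
  field_simp

/-- Asymptotic growth rate of the universal-inference e-process for testing equality of
two Poisson intensities: if `N_A(t)/t → a` and `N_B(t)/t → b`, then
`(log E(t))/t → a log(2a/(a+b)) + b log(2b/(a+b))`. -/
theorem log_E_growth_rate (φ a b : ℝ) (hφ : 0 < φ) (ha : 0 < a) (hb : 0 < b)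
    (NA NB : ℝ → ℝ) (hNA : ∀ t : ℝ, 0 ≤ NA t) (hNB : ∀ t : ℝ, 0 ≤ NB t)
    (hNAlim : Filter.Tendsto (fun t : ℝ => NA t / t) Filter.atTop (nhds a))
    (hNBlim : Filter.Tendsto (fun t : ℝ => NB t / t) Filter.atTop (nhds b)) :
    Filter.Tendsto
      (fun t : ℝ =>
        (2 * φ * Real.log φ - 2 * Real.log (Real.Gamma φ)
            + Real.log (Real.Gamma (φ + NA t)) + Real.log (Real.Gamma (φ + NB t))
            - (2 * φ + NA t + NB t) * Real.log (φ + (NA t + NB t) / 2)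
            + NA t + NB t) / t)
      Filter.atTop
      (nhds (a * Real.log (2 * a / (a + b)) + b * Real.log (2 * b / (a + b)))) := by
  have h0 : Tendsto (fun t : ℝ => φ / t) atTop (nhds 0) :=
    tendsto_const_nhds.div_atTop tendsto_id
  have hx : Tendsto (fun t : ℝ => (φ + NA t) / t) atTop (nhds a) := by
    have h := h0.add hNAlim
    rw [zero_add] at h
    exact h.congr (fun t => (add_div _ _ _).symm)
  have hy : Tendsto (fun t : ℝ => (φ + NB t) / t) atTop (nhds b) := by
    have h := h0.add hNBlim
    rw [zero_add] at h
    exact h.congr (fun t => (add_div _ _ _).symm)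
  have hm : Tendsto (fun t : ℝ => (φ + (NA t + NB t) / 2) / t) atTop (nhds ((a + b) / 2)) := by
    have h := h0.add ((hNAlim.add hNBlim).div_const 2)
    rw [zero_add] at h
    apply Tendsto.congr' _ h
    filter_upwards [eventually_ne_atTop (0:ℝ)] with t ht
    field_simp
  have hga := tendsto_gamma_comp ha hx
  have hgb := tendsto_gamma_comp hb hy
  have hC : Tendsto (fun t : ℝ =>
      (2 * φ * Real.log φ - 2 * Real.log (Real.Gamma φ) - 2 * φ) / t) atTop (nhds 0) :=
    tendsto_const_nhds.div_atTop tendsto_id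
  have contmul : ∀ c : ℝ, 0 < c → ContinuousAt (fun z : ℝ => z * Real.log z) c := by
    intro c hc
    exact continuousAt_id.mul (Real.continuousAt_log (ne_of_gt hc))
  have hA2 : Tendsto (fun t : ℝ => ((φ + NA t) / t) * Real.log ((φ + NA t) / t)) atTop
      (nhds (a * Real.log a)) := ((contmul a ha).tendsto).comp hx
  have hB2 : Tendsto (fun t : ℝ => ((φ + NB t) / t) * Real.log ((φ + NB t) / t)) atTop
      (nhds (b * Real.log b)) := ((contmul b hb).tendsto).comp hy
  have hM2 : Tendsto (fun t : ℝ =>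
      ((φ + (NA t + NB t) / 2) / t) * Real.log ((φ + (NA t + NB t) / 2) / t)) atTop
      (nhds ((a + b) / 2 * Real.log ((a + b) / 2))) :=
    ((contmul ((a + b) / 2) (by positivity)).tendsto).comp hm
  have htot := ((((hC.add hga).add hgb).add (hA2.add hB2)).sub (hM2.const_mul 2))
  have hval : (0 + 0 + 0 + (a * Real.log a + b * Real.log b)
        - 2 * ((a + b) / 2 * Real.log ((a + b) / 2)))
      = a * Real.log (2 * a / (a + b)) + b * Real.log (2 * b / (a + b)) := by
    have hab : (0:ℝ) < a + b := by linarith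
    have e1 : (2 * a / (a + b)) = a / ((a + b) / 2) := by field_simp
    have e2 : (2 * b / (a + b)) = b / ((a + b) / 2) := by field_simp
    rw [e1, e2, Real.log_div (ne_of_gt ha) (by positivity),
      Real.log_div (ne_of_gt hb) (by positivity)]
    ring
  rw [hval] at htot
  apply Tendsto.congr' _ htot
  filter_upwards [eventually_gt_atTop (0:ℝ)] with t ht
  have hxp : (0:ℝ) < φ + NA t := by linarith [hNA t]
  have hyp : (0:ℝ) < φ + NB t := by linarith [hNB t]
  have hmp : (0:ℝ) < φ + (NA t + NB t) / 2 := by linarith [hNA t, hNB t]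
  rw [Real.log_div (ne_of_gt hxp) (ne_of_gt ht), Real.log_div (ne_of_gt hyp) (ne_of_gt ht),
    Real.log_div (ne_of_gt hmp) (ne_of_gt ht)]
  field_simp
  ring
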